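/- arXiv:2112.00099 — 4 statements merged into one kernel-verified Lean document; each statement's English description precedes it below -/
import Mathlib

section
/- Let E be a finite-dimensional real normed space and let X be a real Banach space. Then the space B(E, X**) of bounded linear operators from E into the bidual of X is isometrically isomorphic to the bidual B(E, X)** of the space of bounded linear operators from E to X; that is, there exists an isometric linear isomorphism between E →L X** and the double (topological) dual of E →L X. -/
namespace NormedSpace

/-- The topological dual of a seminormed space `E` (as in the older Mathlib). -/
abbrev Dual (𝕜 : Type*) [NontriviallyNormedField 𝕜] (E : Type*) [SeminormedAddCommGroup E]
    [NormedSpace 𝕜 E] : Type _ := E →L[𝕜] 𝕜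

noncomputable instance (𝕜 : Type*) [NontriviallyNormedField 𝕜] (E : Type*) [SeminormedAddCommGroup E]
    [NormedSpace 𝕜 E] : NormedSpace 𝕜 (Dual 𝕜 E) := inferInstance

noncomputable instance (𝕜 : Type*) [NontriviallyNormedField 𝕜] (E : Type*) [SeminormedAddCommGroup E]
    [NormedSpace 𝕜 E] : SeminormedAddCommGroup (Dual 𝕜 E) := inferInstance

end NormedSpace

open NormedSpace

namespace DeanAux

open ContinuousLinearMap

lemma helper {a K : ℝ} (hK : 0 ≤ K)
    (h : ∀ δ : ℝ, 0 < δ → δ < 1 → a ≤ (1 + δ) * (1 - δ)⁻¹ * K) : a ≤ K := by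
  by_contra hc
  push_neg at hc
  set δ := (a - K) / (2 * (a + K) + 2) with hδdef
  have hden : (0:ℝ) < 2 * (a + K) + 2 := by nlinarith
  have h1 : 0 < δ := div_pos (by linarith) hden
  have h2 : δ < 1 := by
    rw [hδdef, div_lt_one hden]; linarith
  have h3 : (0:ℝ) < 1 - δ := by linarith
  have hle := h δ h1 h2
  have h4 : a * (1 - δ) ≤ (1 + δ) * K := by
    have := mul_le_mul_of_nonneg_right hle h3.le
    calc a * (1 - δ) ≤ (1 + δ) * (1 - δ)⁻¹ * K * (1 - δ) := this
      _ = (1 + δ) * K * ((1 - δ)⁻¹ * (1 - δ)) := by ring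
      _ = (1 + δ) * K := by rw [inv_mul_cancel₀ h3.ne']; ring
  have hδmul : δ * (2 * (a + K) + 2) = a - K := by
    rw [hδdef]; field_simp
    exact div_self (ne_of_gt (by linarith))
  nlinarith [h4, hδmul]

variable {E X : Type*} [NormedAddCommGroup E] [NormedSpace ℝ E] [FiniteDimensional ℝ E]
  [NormedAddCommGroup X] [NormedSpace ℝ X]

/-- norming element for a real functional -/
lemma norming (f : X →L[ℝ] ℝ) {η : ℝ} (hη : 0 < η) :
    ∃ x : X, ‖x‖ ≤ 1 ∧ ‖f‖ - η ≤ f x := by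
  obtain ⟨x, hx1, hx2⟩ := f.exists_lt_apply_of_lt_opNorm (show ‖f‖ - η < ‖f‖ by linarith)
  rcases le_or_gt 0 (f x) with hs | hs
  · exact ⟨x, hx1.le, by rw [Real.norm_eq_abs, abs_of_nonneg hs] at hx2; linarith⟩
  · refine ⟨-x, ?_, ?_⟩
    · rw [norm_neg]; exact hx1.le
    rw [map_neg]
    rw [Real.norm_eq_abs, abs_of_neg hs] at hx2
    linarith

variable {ι : Type*} [Fintype ι]

noncomputable def coordL (b : Module.Basis ι ℝ E) (j : ι) : E →L[ℝ] ℝ :=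
  LinearMap.toContinuousLinearMap (b.coord j)

@[simp] lemma coordL_apply (b : Module.Basis ι ℝ E) (j : ι) (e : E) :
    coordL b j e = b.repr e j := by
  simp [coordL, LinearMap.toContinuousLinearMap, Module.Basis.coord_apply]

/-- the elementary functional `T ↦ f (T e)` on `B(E,X)`. -/
noncomputable def elem (e : E) (f : Dual ℝ X) : Dual ℝ (E →L[ℝ] X) :=
  f.comp (ContinuousLinearMap.apply ℝ X e)

@[simp] lemma elem_apply (e : E) (f : Dual ℝ X) (T : E →L[ℝ] X) :
    elem e f T = f (T e) := rfl

lemma norm_elem_le (e : E) (f : Dual ℝ X) : ‖elem (X := X) e f‖ ≤ ‖e‖ * ‖f‖ := by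
  have h1 : ‖ContinuousLinearMap.apply ℝ X e‖ ≤ ‖e‖ := by
    refine opNorm_le_bound _ (norm_nonneg e) fun T => ?_
    simpa [mul_comm] using T.le_opNorm e
  calc ‖elem (X := X) e f‖ ≤ ‖f‖ * ‖ContinuousLinearMap.apply ℝ X e‖ := opNorm_comp_le _ _
    _ ≤ ‖f‖ * ‖e‖ := by
        exact mul_le_mul_of_nonneg_left h1 (norm_nonneg f)
    _ = ‖e‖ * ‖f‖ := mul_comm _ _

/-- `fj b j u = u ∘ (x ↦ (coord j) ⊗ x)` -/
noncomputable def fj (b : Module.Basis ι ℝ E) (j : ι) (u : Dual ℝ (E →L[ℝ] X)) : Dual ℝ X :=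
  u.comp (smulRightL ℝ E X (coordL b j))

@[simp] lemma fj_apply (b : Module.Basis ι ℝ E) (j : ι) (u : Dual ℝ (E →L[ℝ] X)) (x : X) :
    fj b j u x = u ((coordL b j).smulRight x) := rfl


set_option maxHeartbeats 1000000 in
lemma key (b : Module.Basis ι ℝ E) (S : E →L[ℝ] Dual ℝ (Dual ℝ X)) (u : Dual ℝ (E →L[ℝ] X)) :
    |∑ j, S (b j) (fj b j u)| ≤ ‖S‖ * ‖u‖ := by
  refine helper (by positivity) fun δ hδ0 hδ1 => ?_
  classical
  have h1δ : (0:ℝ) < 1 - δ := by linarith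
  -- a finite δ-net for the unit sphere
  have hcomp : IsCompact (Metric.sphere (0:E) 1) := isCompact_sphere 0 1
  obtain ⟨t0, ht0fin, ht0cov⟩ := (Metric.totallyBounded_iff.mp hcomp.totallyBounded) δ hδ0
  set tS : Set E := {y ∈ t0 | ∃ z ∈ Metric.sphere (0:E) 1, z ∈ Metric.ball y δ} with htSdef
  have htfin : tS.Finite := ht0fin.subset (Set.sep_subset _ _)
  haveI : Fintype tS := htfin.fintype
  have hnorm_t : ∀ y ∈ tS, ‖y‖ ≤ 1 + δ := by
    rintro y ⟨-, z, hz, hzy⟩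
    have h1 : ‖z‖ = 1 := mem_sphere_zero_iff_norm.mp hz
    have h2 : dist z y < δ := Metric.mem_ball.mp hzy
    calc ‖y‖ = ‖z - (z - y)‖ := by rw [sub_sub_cancel]
      _ ≤ ‖z‖ + ‖z - y‖ := norm_sub_le _ _
      _ ≤ 1 + δ := by
          rw [h1, ← dist_eq_norm]
          linarith
  have hcov : ∀ z ∈ Metric.sphere (0:E) 1, ∃ y ∈ tS, dist z y < δ := by
    intro z hz
    obtain ⟨y, hy, hzy⟩ := Set.mem_iUnion₂.mp (ht0cov hz)
    exact ⟨y, ⟨hy, z, hz, hzy⟩, Metric.mem_ball.mp hzy⟩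
  -- the evaluation map on the net, and the key norm estimate for it
  have P2 : ∀ T : E →L[ℝ] X, (1 - δ) * ‖T‖ ≤ ‖(fun i : tS => T i.1)‖ := by
    intro T
    set K := ‖(fun i : tS => T i.1)‖ with hK
    have hK0 : 0 ≤ K := norm_nonneg _
    have step : ‖T‖ ≤ K + δ * ‖T‖ := by
      refine opNorm_le_bound T (by positivity) fun x => ?_
      rcases eq_or_ne x 0 with rfl | hx
      · simp
      · have hxn : (0:ℝ) < ‖x‖ := norm_pos_iff.mpr hx
        set z := ‖x‖⁻¹ • x with hzdef
        have hz : z ∈ Metric.sphere (0:E) 1 := by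
          rw [mem_sphere_zero_iff_norm, hzdef, norm_smul, norm_inv, norm_norm,
            inv_mul_cancel₀ hxn.ne']
        obtain ⟨y, hy, hzy⟩ := hcov z hz
        have hTy : ‖T y‖ ≤ K := norm_le_pi_norm (fun i : tS => T i.1) ⟨y, hy⟩
        have hTz : ‖T z‖ ≤ K + δ * ‖T‖ := by
          calc ‖T z‖ = ‖T y + T (z - y)‖ := by rw [map_sub, add_sub_cancel]
            _ ≤ ‖T y‖ + ‖T (z - y)‖ := norm_add_le _ _
            _ ≤ K + ‖T‖ * ‖z - y‖ := add_le_add hTy (T.le_opNorm _)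
            _ ≤ K + ‖T‖ * δ := by
                have := (dist_eq_norm z y) ▸ hzy.le
                exact add_le_add_right (mul_le_mul_of_nonneg_left this (norm_nonneg T)) K
            _ = K + δ * ‖T‖ := by ring
        have hx_eq : T x = ‖x‖ • T z := by
          rw [hzdef, map_smul, smul_smul, mul_inv_cancel₀ hxn.ne', one_smul]
        calc ‖T x‖ = ‖x‖ * ‖T z‖ := by
              rw [hx_eq, norm_smul, norm_norm]
          _ ≤ (K + δ * ‖T‖) * ‖x‖ := by
              rw [mul_comm]
              exact mul_le_mul_of_nonneg_right hTz hxn.le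
    nlinarith [step]
  let ev : (E →L[ℝ] X) →ₗ[ℝ] (tS → X) :=
    { toFun := fun T i => T i.1
      map_add' := fun T T' => rfl
      map_smul' := fun c T => rfl }
  have hev : ∀ T : E →L[ℝ] X, ev T = fun i : tS => T i.1 := fun _ => rfl
  have hinj : Function.Injective ev := by
    intro T T' h
    have h0 : ev (T - T') = 0 := by
      simp only [map_sub, h, sub_self]
    have := P2 (T - T')
    rw [← hev, h0] at this
    simp only [norm_zero] at this
    have hTT : ‖T - T'‖ ≤ 0 := by
      by_contra hcon
      push_neg at hcon
      nlinarith
    have h5 : T - T' = 0 := by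
      rw [← norm_le_zero_iff]
      exact hTT
    exact sub_eq_zero.mp h5
  -- the functional on the range of ev, and its Hahn-Banach extension
  set eqv := LinearEquiv.ofInjective ev hinj with heqv
  let ulin : LinearMap.range ev →ₗ[ℝ] ℝ := u.toLinearMap ∘ₗ eqv.symm.toLinearMap
  have hulin : ∀ T : E →L[ℝ] X, ulin ⟨ev T, LinearMap.mem_range_self ev T⟩ = u T := by
    intro T
    have h1 : eqv.symm ⟨ev T, LinearMap.mem_range_self ev T⟩ = T := by
      rw [LinearEquiv.symm_apply_eq]
      exact Subtype.ext (by rw [LinearEquiv.ofInjective_apply])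
    have h2 : ulin ⟨ev T, LinearMap.mem_range_self ev T⟩
        = u (eqv.symm ⟨ev T, LinearMap.mem_range_self ev T⟩) := rfl
    rw [h2, h1]
  have hbound : ∀ v : LinearMap.range ev, ‖ulin v‖ ≤ ((1 - δ)⁻¹ * ‖u‖) * ‖v‖ := by
    rintro ⟨v, T, rfl⟩
    rw [hulin T]
    have hT : ‖T‖ ≤ (1 - δ)⁻¹ * ‖ev T‖ := by
      rw [le_inv_mul_iff₀ h1δ]
      exact P2 T
    have hvT : ‖(⟨ev T, LinearMap.mem_range_self ev T⟩ : LinearMap.range ev)‖ = ‖ev T‖ := rfl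
    rw [hvT, Real.norm_eq_abs]
    calc |u T| ≤ ‖u‖ * ‖T‖ := u.le_opNorm T
      _ ≤ ‖u‖ * ((1 - δ)⁻¹ * ‖ev T‖) := mul_le_mul_of_nonneg_left hT (norm_nonneg u)
      _ = ((1 - δ)⁻¹ * ‖u‖) * ‖ev T‖ := by ring
  let uhat : (LinearMap.range ev : Submodule ℝ (tS → X)) →L[ℝ] ℝ :=
    LinearMap.mkContinuous ulin ((1 - δ)⁻¹ * ‖u‖) hbound
  obtain ⟨g, hg_ext, hg_norm⟩ := exists_extension_norm_eq (LinearMap.range ev) uhat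
  have hg_norm_le : ‖g‖ ≤ (1 - δ)⁻¹ * ‖u‖ := by
    rw [hg_norm]
    exact LinearMap.mkContinuous_norm_le ulin (by positivity) hbound
  have hW : ∀ T : E →L[ℝ] X, g (ev T) = u T := by
    intro T
    have := hg_ext ⟨ev T, LinearMap.mem_range_self ev T⟩
    rw [this]
    exact hulin T
  -- the coordinate functionals of g
  let sing : (i : tS) → X →L[ℝ] (tS → X) := fun i =>
    LinearMap.mkContinuous (LinearMap.single ℝ (fun _ : tS => X) i) 1
      (fun x => by
        have hrfl : (LinearMap.single ℝ (fun _ : tS => X) i) x = Pi.single i x := rfl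
        rw [one_mul, hrfl]
        rw [pi_norm_le_iff_of_nonneg (norm_nonneg x)]
        intro j
        rcases eq_or_ne j i with rfl | hji
        · simp
        · simp [Pi.single_eq_of_ne hji])
  have hsing : ∀ (i : tS) (x : X), sing i x = Pi.single i x := fun i x => rfl
  let gi : (i : tS) → Dual ℝ X := fun i => g.comp (sing i)
  have hgi : ∀ (i : tS) (x : X), gi i x = g (Pi.single i x) := fun i x => rfl
  have hg_decomp : ∀ x : tS → X, g x = ∑ i, gi i (x i) := by
    intro x
    conv_lhs => rw [← Finset.univ_sum_single x]
    rw [map_sum]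
    exact Finset.sum_congr rfl fun i _ => rfl
  -- Claim A : ∑ ‖gᵢ‖ ≤ ‖g‖
  have claimA : ∑ i, ‖gi i‖ ≤ ‖g‖ := by
    refine le_of_forall_pos_le_add fun η hη => ?_
    set m := Fintype.card tS with hm
    have hη' : 0 < η / (m + 1) := by positivity
    choose x hx1 hx2 using fun i => norming (gi i) hη'
    have hsum1 : ∑ i, ‖gi i‖ - m * (η / (m + 1)) ≤ g (fun i => x i) := by
      rw [hg_decomp (fun i => x i)]
      have := Finset.sum_le_sum (fun i (_ : i ∈ Finset.univ) => hx2 i)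
      rw [Finset.sum_sub_distrib, Finset.sum_const, Finset.card_univ] at this
      simpa [nsmul_eq_mul, hm] using this
    have hxnorm : ‖(fun i => x i : tS → X)‖ ≤ 1 := by
      rw [pi_norm_le_iff_of_nonneg zero_le_one]
      exact hx1
    have hsum2 : g (fun i => x i) ≤ ‖g‖ := by
      calc g (fun i => x i) ≤ |g (fun i => x i)| := le_abs_self _
        _ ≤ ‖g‖ * ‖(fun i => x i : tS → X)‖ := by
            rw [← Real.norm_eq_abs]; exact g.le_opNorm _
        _ ≤ ‖g‖ * 1 := mul_le_mul_of_nonneg_left hxnorm (norm_nonneg g)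
        _ = ‖g‖ := mul_one _
    have hmη : (m : ℝ) * (η / (m + 1)) ≤ η := by
      have h1 : (0:ℝ) < (m:ℝ) + 1 := by positivity
      have h2 : ((m:ℝ) + 1) * (η / (m + 1)) = η := by field_simp
      nlinarith [mul_le_mul_of_nonneg_right (show (m:ℝ) ≤ (m:ℝ) + 1 by linarith) hη'.le]
    linarith
  -- Claim B : the quantity equals the pairing through the net
  have h1 : ∀ (i : tS) (c : ℝ) (x : X),
      g (Pi.single i (c • x)) = c * gi i x := by
    intro i c x
    have hps : Pi.single (M := fun _ : tS => X) i (c • x) = c • Pi.single (M := fun _ : tS => X) i x := by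
      funext k
      rcases eq_or_ne k i with rfl | hk
      · simp
      · simp [Pi.single_eq_of_ne hk]
    rw [hps, map_smul, hgi]
    rfl
  have hsub : ∀ j : ι, fj b j u = ∑ i : tS, b.repr i.1 j • gi i := by
    intro j
    ext x
    have hRHS : (∑ i : tS, b.repr i.1 j • gi i) x = ∑ i : tS, b.repr i.1 j * gi i x := by
      rw [ContinuousLinearMap.sum_apply]
      exact Finset.sum_congr rfl fun i _ => rfl
    rw [hRHS]
    calc fj b j u x = u ((coordL b j).smulRight x) := rfl
      _ = g (ev ((coordL b j).smulRight x)) := (hW _).symm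
      _ = g (fun i : tS => b.repr i.1 j • x) := by
          have harg : (ev ((coordL b j).smulRight x)) = fun i : tS => b.repr i.1 j • x := by
            funext i
            show (coordL b j) i.1 • x = b.repr i.1 j • x
            rw [coordL_apply]
          rw [harg]
      _ = g (∑ i : tS, Pi.single i (b.repr i.1 j • x)) := by
          rw [Finset.univ_sum_single (fun i : tS => b.repr i.1 j • x)]
      _ = ∑ i : tS, g (Pi.single i (b.repr i.1 j • x)) := map_sum g _ _
      _ = ∑ i : tS, b.repr i.1 j * gi i x :=
          Finset.sum_congr rfl fun i _ => h1 i _ x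
  have hSi : ∀ i : tS, (∑ j, b.repr i.1 j • S (b j)) = S i.1 := by
    intro i
    calc ∑ j, b.repr i.1 j • S (b j) = ∑ j, S (b.repr i.1 j • b j) :=
          Finset.sum_congr rfl fun j _ => (map_smul S _ _).symm
      _ = S (∑ j, b.repr i.1 j • b j) := (map_sum S _ _).symm
      _ = S i.1 := by rw [Module.Basis.sum_repr]
  have claimB : ∑ j, S (b j) (fj b j u) = ∑ i : tS, S i.1 (gi i) := by
    calc ∑ j, S (b j) (fj b j u)
        = ∑ j, ∑ i : tS, b.repr i.1 j * S (b j) (gi i) := by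
          refine Finset.sum_congr rfl fun j _ => ?_
          rw [hsub j, map_sum]
          refine Finset.sum_congr rfl fun i _ => ?_
          rw [map_smul]
          rfl
      _ = ∑ i : tS, ∑ j, b.repr i.1 j * S (b j) (gi i) := Finset.sum_comm
      _ = ∑ i : tS, S i.1 (gi i) := by
          refine Finset.sum_congr rfl fun i _ => ?_
          calc ∑ j, b.repr i.1 j * S (b j) (gi i)
              = ∑ j, (b.repr i.1 j • S (b j)) (gi i) :=
                Finset.sum_congr rfl fun j _ => rfl
            _ = (∑ j, b.repr i.1 j • S (b j)) (gi i) :=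
                (ContinuousLinearMap.sum_apply _ _ _).symm
            _ = S i.1 (gi i) := by rw [hSi i]
  rw [claimB]
  have habs : |∑ i : tS, S i.1 (gi i)| ≤ ∑ i : tS, ‖S i.1‖ * ‖gi i‖ := by
    refine (Finset.abs_sum_le_sum_abs _ _).trans ?_
    refine Finset.sum_le_sum fun i _ => ?_
    rw [← Real.norm_eq_abs]
    exact (S i.1).le_opNorm (gi i)
  have hbound2 : ∑ i : tS, ‖S i.1‖ * ‖gi i‖ ≤ (1 + δ) * ‖S‖ * ∑ i, ‖gi i‖ := by
    rw [Finset.mul_sum]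
    refine Finset.sum_le_sum fun i _ => ?_
    refine mul_le_mul_of_nonneg_right ?_ (norm_nonneg _)
    calc ‖S i.1‖ ≤ ‖S‖ * ‖i.1‖ := S.le_opNorm _
      _ ≤ ‖S‖ * (1 + δ) := mul_le_mul_of_nonneg_left (hnorm_t i.1 i.2) (norm_nonneg S)
      _ = (1 + δ) * ‖S‖ := mul_comm _ _
  have h3 : (1 + δ) * ‖S‖ * ∑ i, ‖gi i‖ ≤ (1 + δ) * ‖S‖ * ‖g‖ :=
    mul_le_mul_of_nonneg_left claimA (by positivity)
  have h4 : (1 + δ) * ‖S‖ * ‖g‖ ≤ (1 + δ) * ‖S‖ * ((1 - δ)⁻¹ * ‖u‖) :=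
    mul_le_mul_of_nonneg_left hg_norm_le (by positivity)
  calc |∑ i : tS, S i.1 (gi i)| ≤ ∑ i : tS, ‖S i.1‖ * ‖gi i‖ := habs
    _ ≤ (1 + δ) * ‖S‖ * ∑ i, ‖gi i‖ := hbound2
    _ ≤ (1 + δ) * ‖S‖ * ‖g‖ := h3
    _ ≤ (1 + δ) * ‖S‖ * ((1 - δ)⁻¹ * ‖u‖) := h4
    _ = (1 + δ) * (1 - δ)⁻¹ * (‖S‖ * ‖u‖) := by ring

lemma sum_repr_smul (b : Module.Basis ι ℝ E) (S : E →L[ℝ] Dual ℝ (Dual ℝ X)) (e : E) :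
    ∑ j, b.repr e j • S (b j) = S e := by
  calc ∑ j, b.repr e j • S (b j) = ∑ j, S (b.repr e j • b j) :=
        Finset.sum_congr rfl fun j _ => (map_smul S _ _).symm
    _ = S (∑ j, b.repr e j • b j) := (map_sum S _ _).symm
    _ = S e := by rw [Module.Basis.sum_repr]

lemma sum_repr_smulX (b : Module.Basis ι ℝ E) (T : E →L[ℝ] X) (e : E) :
    ∑ j, b.repr e j • T (b j) = T e := by
  calc ∑ j, b.repr e j • T (b j) = ∑ j, T (b.repr e j • b j) :=
        Finset.sum_congr rfl fun j _ => (map_smul T _ _).symm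
    _ = T (∑ j, b.repr e j • b j) := (map_sum T _ _).symm
    _ = T e := by rw [Module.Basis.sum_repr]

/-- The canonical map `B(E,X**) → B(E,X)**`. -/
noncomputable def lam (b : Module.Basis ι ℝ E) (S : E →L[ℝ] Dual ℝ (Dual ℝ X)) :
    Dual ℝ (Dual ℝ (E →L[ℝ] X)) :=
  LinearMap.mkContinuous
    { toFun := fun u => ∑ j, S (b j) (fj b j u)
      map_add' := by
        intro u v
        rw [← Finset.sum_add_distrib]
        refine Finset.sum_congr rfl fun j _ => ?_
        have h : fj (X := X) b j (u + v) = fj b j u + fj b j v := by ext x; rfl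
        rw [h, map_add]
      map_smul' := by
        intro c u
        rw [RingHom.id_apply, Finset.smul_sum]
        refine Finset.sum_congr rfl fun j _ => ?_
        have h : fj (X := X) b j (c • u) = c • fj b j u := by ext x; rfl
        rw [h, map_smul] }
    ‖S‖ (fun u => by
      rw [Real.norm_eq_abs]
      exact key b S u)

@[simp] lemma lam_apply (b : Module.Basis ι ℝ E) (S : E →L[ℝ] Dual ℝ (Dual ℝ X))
    (u : Dual ℝ (E →L[ℝ] X)) : lam b S u = ∑ j, S (b j) (fj b j u) := rfl

lemma norm_lam_le (b : Module.Basis ι ℝ E) (S : E →L[ℝ] Dual ℝ (Dual ℝ X)) :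
    ‖lam b S‖ ≤ ‖S‖ :=
  LinearMap.mkContinuous_norm_le _ (norm_nonneg S) _

set_option maxHeartbeats 1000000 in
lemma lam_elem (b : Module.Basis ι ℝ E) (S : E →L[ℝ] Dual ℝ (Dual ℝ X)) (e : E) (f : Dual ℝ X) :
    lam b S (elem e f) = S e f := by
  have hfj : ∀ j, fj b j (elem e f) = b.repr e j • f := by
    intro j
    ext x
    show f ((coordL b j) e • x) = b.repr e j • f x
    rw [coordL_apply, map_smul]
  rw [lam_apply]
  calc ∑ j, S (b j) (fj b j (elem e f)) = ∑ j, S (b j) (b.repr e j • f) :=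
        Finset.sum_congr rfl fun j _ => by rw [hfj j]
    _ = ∑ j, (b.repr e j • S (b j)) f :=
        Finset.sum_congr rfl fun j _ => by
          rw [map_smul, ContinuousLinearMap.smul_apply]
    _ = (∑ j, b.repr e j • S (b j)) f := by
        rw [ContinuousLinearMap.sum_apply]
    _ = S e f := by rw [sum_repr_smul b S e]

/-- the value of the inverse map at `e`. -/
noncomputable def thetaInner (F : Dual ℝ (Dual ℝ (E →L[ℝ] X))) (e : E) :
    Dual ℝ (Dual ℝ X) :=
  LinearMap.mkContinuous
    { toFun := fun f => F (elem e f)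
      map_add' := fun f f' => by
        have h : elem (X := X) e (f + f') = elem e f + elem e f' := by
          ext T; simp [elem_apply]
        show F (elem e (f + f')) = F (elem e f) + F (elem e f')
        rw [h, map_add]
      map_smul' := fun c f => by
        have h : elem (X := X) e (c • f) = c • elem e f := by
          ext T; simp [elem_apply]
        show F (elem e (c • f)) = c • F (elem e f)
        rw [h, map_smul] }
    (‖F‖ * ‖e‖) (fun f => by
      show ‖F (elem e f)‖ ≤ ‖F‖ * ‖e‖ * ‖f‖
      calc ‖F (elem e f)‖ ≤ ‖F‖ * ‖elem e f‖ := F.le_opNorm _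
        _ ≤ ‖F‖ * (‖e‖ * ‖f‖) :=
            mul_le_mul_of_nonneg_left (norm_elem_le e f) (norm_nonneg F)
        _ = ‖F‖ * ‖e‖ * ‖f‖ := by ring)

@[simp] lemma thetaInner_apply (F : Dual ℝ (Dual ℝ (E →L[ℝ] X))) (e : E) (f : Dual ℝ X) :
    thetaInner F e f = F (elem e f) := rfl

lemma norm_thetaInner_le (F : Dual ℝ (Dual ℝ (E →L[ℝ] X))) (e : E) :
    ‖thetaInner F e‖ ≤ ‖F‖ * ‖e‖ :=
  LinearMap.mkContinuous_norm_le _ (by positivity) _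

/-- The canonical map `B(E,X)** → B(E,X**)`. -/
noncomputable def theta (F : Dual ℝ (Dual ℝ (E →L[ℝ] X))) :
    E →L[ℝ] Dual ℝ (Dual ℝ X) :=
  LinearMap.mkContinuous
    { toFun := thetaInner F
      map_add' := fun e e' => by
        refine ContinuousLinearMap.ext fun f => ?_
        rw [ContinuousLinearMap.add_apply, thetaInner_apply, thetaInner_apply,
          thetaInner_apply]
        have h : elem (X := X) (e + e') f = elem e f + elem e' f := by
          ext T; simp [elem_apply]
        rw [h, map_add]
      map_smul' := fun c e => by
        refine ContinuousLinearMap.ext fun f => ?_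
        rw [RingHom.id_apply, ContinuousLinearMap.smul_apply, thetaInner_apply,
          thetaInner_apply]
        have h : elem (X := X) (c • e) f = c • elem e f := by
          ext T; simp [elem_apply]
        rw [h, map_smul] }
    ‖F‖ (fun e => norm_thetaInner_le F e)

@[simp] lemma theta_apply (F : Dual ℝ (Dual ℝ (E →L[ℝ] X))) (e : E) (f : Dual ℝ X) :
    theta F e f = F (elem e f) := rfl

lemma theta_lam (b : Module.Basis ι ℝ E) (S : E →L[ℝ] Dual ℝ (Dual ℝ X)) :
    theta (lam b S) = S := by
  refine ContinuousLinearMap.ext fun e => ContinuousLinearMap.ext fun f => ?_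
  rw [theta_apply]
  exact lam_elem b S e f

lemma lam_theta (b : Module.Basis ι ℝ E) (F : Dual ℝ (Dual ℝ (E →L[ℝ] X))) :
    lam b (theta F) = F := by
  refine ContinuousLinearMap.ext fun u => ?_
  show ∑ j, theta F (b j) (fj b j u) = F u
  calc ∑ j, theta F (b j) (fj b j u) = ∑ j, F (elem (b j) (fj b j u)) :=
        Finset.sum_congr rfl fun j _ => theta_apply F _ _
    _ = F (∑ j, elem (b j) (fj b j u)) := (map_sum F _ _).symm
    _ = F u := by
        congr 1
        refine ContinuousLinearMap.ext fun T => ?_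
        calc (∑ j, elem (b j) (fj b j u)) T
            = ∑ j, u ((coordL b j).smulRight (T (b j))) := by
              rw [ContinuousLinearMap.sum_apply]
              exact Finset.sum_congr rfl fun j _ => rfl
          _ = u (∑ j, (coordL b j).smulRight (T (b j))) := (map_sum u _ _).symm
          _ = u T := by
              congr 1
              refine ContinuousLinearMap.ext fun e => ?_
              calc (∑ j, (coordL b j).smulRight (T (b j))) e
                  = ∑ j, (coordL b j) e • T (b j) := by
                    rw [ContinuousLinearMap.sum_apply]
                    exact Finset.sum_congr rfl fun j _ => rfl
                _ = ∑ j, b.repr e j • T (b j) :=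
                    Finset.sum_congr rfl fun j _ => by rw [coordL_apply]
                _ = T e := sum_repr_smulX b T e

lemma norm_lam_ge (b : Module.Basis ι ℝ E) (S : E →L[ℝ] Dual ℝ (Dual ℝ X)) :
    ‖S‖ ≤ ‖lam b S‖ := by
  refine opNorm_le_bound S (norm_nonneg (lam b S)) fun e => ?_
  refine opNorm_le_bound (S e) (mul_nonneg (norm_nonneg _) (norm_nonneg _)) fun f => ?_
  calc ‖S e f‖ = ‖lam b S (elem e f)‖ := by rw [lam_elem]
    _ ≤ ‖lam b S‖ * ‖elem e f‖ := le_opNorm _ _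
    _ ≤ ‖lam b S‖ * (‖e‖ * ‖f‖) :=
        mul_le_mul_of_nonneg_left (norm_elem_le e f) (norm_nonneg _)
    _ = ‖lam b S‖ * ‖e‖ * ‖f‖ := by ring

/-- **Dean identity**, as an isometric isomorphism. -/
noncomputable def deanIso (b : Module.Basis ι ℝ E) :
    (E →L[ℝ] Dual ℝ (Dual ℝ X)) ≃ₗᵢ[ℝ] Dual ℝ (Dual ℝ (E →L[ℝ] X)) :=
{ toFun := lam b
  map_add' := fun S S' => by
    refine ContinuousLinearMap.ext fun u => ?_
    show lam b (S + S') u = lam b S u + lam b S' u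
    simp only [lam_apply]
    rw [← Finset.sum_add_distrib]
    exact Finset.sum_congr rfl fun j _ => by
      simp [ContinuousLinearMap.add_apply]
  map_smul' := fun c S => by
    refine ContinuousLinearMap.ext fun u => ?_
    show lam b (c • S) u = (c • lam b S) u
    simp only [lam_apply]
    rw [ContinuousLinearMap.smul_apply, lam_apply, Finset.smul_sum]
    exact Finset.sum_congr rfl fun j _ => by
      simp [ContinuousLinearMap.smul_apply]
  invFun := theta
  left_inv := theta_lam b
  right_inv := lam_theta b
  norm_map' := fun S => le_antisymm (norm_lam_le b S) (norm_lam_ge b S) }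

end DeanAux

/-- **Dean identity.** For a finite-dimensional real normed space `E` and a real Banach
space `X`, the space `B(E, X**)` is isometrically isomorphic to `B(E, X)**`. -/
theorem dean_identity (E X : Type*)
    [NormedAddCommGroup E] [NormedSpace ℝ E] [FiniteDimensional ℝ E]
    [NormedAddCommGroup X] [NormedSpace ℝ X] [CompleteSpace X] :
    Nonempty ((E →L[ℝ] Dual ℝ (Dual ℝ X)) ≃ₗᵢ[ℝ] Dual ℝ (Dual ℝ (E →L[ℝ] X))) :=
  ⟨DeanAux.deanIso (Module.finBasis ℝ E)⟩
end

section
/- Let E be a real normed space and X a real Banach space. Then B(E,X) is dense in B(E,X**) in the operator weak*-topology: for every bounded linear operator T : E → X**, every finite set A ⊆ E, every finite set B ⊆ X*, and every ε > 0, there exists a bounded linear operator S : E → X such that |f(S a) − (T a)(f)| < ε for all a ∈ A and all f ∈ B. -/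
open NormedSpace

/-- Exact finite interpolation: for any element of the bidual and any finite set of
functionals, there is an element of `X` agreeing with it on those functionals. -/
lemma exists_agree_on_finset (X : Type*) [NormedAddCommGroup X] [NormedSpace ℝ X]
    (Φ : StrongDual ℝ (StrongDual ℝ X)) (B : Finset (StrongDual ℝ X)) :
    ∃ x : X, ∀ f ∈ B, f x = Φ f := by
  classical
  set ι := {f // f ∈ B}
  set L : X →ₗ[ℝ] (ι → ℝ) := LinearMap.pi (fun i => ((i : StrongDual ℝ X) : X →ₗ[ℝ] ℝ)) with hL
  set W : Submodule ℝ (ι → ℝ) := LinearMap.range L with hW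
  set y : ι → ℝ := fun i => Φ (i : StrongDual ℝ X) with hy
  have hyW : y ∈ W := by
    by_contra hnot
    rw [← Subspace.forall_mem_dualAnnihilator_apply_eq_zero_iff W y] at hnot
    push_neg at hnot
    obtain ⟨φ, hφW, hφy⟩ := hnot
    rw [Submodule.mem_dualAnnihilator] at hφW
    set c : ι → ℝ := fun i => φ (Pi.single i 1) with hc
    have hφeval : ∀ v : ι → ℝ, φ v = ∑ i, c i * v i := by
      intro v
      conv_lhs => rw [← Finset.univ_sum_single v]
      rw [map_sum]
      refine Finset.sum_congr rfl fun i _ => ?_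
      have : (Pi.single i (v i) : ι → ℝ) = v i • (Pi.single i 1 : ι → ℝ) := by
        rw [← Pi.single_smul, smul_eq_mul, mul_one]
      rw [this, map_smul, smul_eq_mul, mul_comm]
    set F : StrongDual ℝ X := ∑ i : ι, c i • (i : StrongDual ℝ X) with hF
    have hF0 : F = 0 := by
      ext x
      have hmem : L x ∈ W := LinearMap.mem_range_self L x
      have := hφW (L x) hmem
      rw [hφeval] at this
      simpa [F, ContinuousLinearMap.sum_apply, ContinuousLinearMap.smul_apply,
        smul_eq_mul, hL, LinearMap.pi_apply] using this
    have h1 : Φ F = 0 := by rw [hF0]; simp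
    have h2 : Φ F = φ y := by
      rw [hF, map_sum, hφeval]
      refine Finset.sum_congr rfl fun i _ => ?_
      rw [map_smul, smul_eq_mul, hy]
    exact hφy (by rw [← h2, h1])
  obtain ⟨x, hx⟩ := hyW
  refine ⟨x, fun f hf => ?_⟩
  have := congrFun hx (⟨f, hf⟩ : ι)
  simpa [hL, LinearMap.pi_apply, hy] using this

/-- Generalized Goldstine theorem: `B(E,X)` is dense in `B(E,X**)` in the operator
weak*-topology. -/
theorem operator_weakStar_dense (E X : Type*)
    [NormedAddCommGroup E] [NormedSpace ℝ E]
    [NormedAddCommGroup X] [NormedSpace ℝ X] [CompleteSpace X]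
    (T : E →L[ℝ] StrongDual ℝ (StrongDual ℝ X))
    (A : Finset E) (B : Finset (StrongDual ℝ X)) (ε : ℝ) (hε : 0 < ε) :
    ∃ S : E →L[ℝ] X, ∀ a ∈ A, ∀ f ∈ B, |f (S a) - T a f| < ε := by
  classical
  set V : Submodule ℝ E := Submodule.span ℝ (A : Set E) with hV
  haveI : FiniteDimensional ℝ V := FiniteDimensional.span_of_finite ℝ A.finite_toSet
  obtain ⟨π, hπ⟩ := Submodule.ClosedComplemented.of_finiteDimensional V
  set b := Module.finBasis ℝ V with hb
  choose x hx using fun i => exists_agree_on_finset X (T ((b i : V) : E)) B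
  set s : V →ₗ[ℝ] X := b.constr ℝ x with hs
  have key : ∀ f ∈ B, ∀ v : V, f (s v) = T (v : E) f := by
    intro f hf
    have : (f : X →ₗ[ℝ] ℝ).comp s =
        (((ContinuousLinearMap.apply ℝ ℝ f).comp T : E →L[ℝ] ℝ) : E →ₗ[ℝ] ℝ).comp V.subtype := by
      apply b.ext
      intro i
      simp only [LinearMap.comp_apply, hs, Module.Basis.constr_basis]
      simpa using hx i f hf
    intro v
    have h2 := LinearMap.congr_fun this v
    simpa using h2
  refine ⟨(LinearMap.toContinuousLinearMap s).comp π, fun a ha f hf => ?_⟩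
  have haV : a ∈ V := Submodule.subset_span ha
  have hπa : π a = (⟨a, haV⟩ : V) := hπ ⟨a, haV⟩
  have : f ((LinearMap.toContinuousLinearMap s).comp π a) = T a f := by
    rw [ContinuousLinearMap.comp_apply, hπa]
    simpa using key f hf ⟨a, haV⟩
  rw [this]
  simpa using hε
end

section
/- Let E and X be real Banach spaces. The relation ≼ on finite-rank bounded linear operators from E to X is transitive: if T ≼ S and S ≼ U for finite-rank bounded operators T, S, U : E → X, then T ≼ U. -/
open Submodule Module

section Aux

variable {K : Type*} [Field K] {V : Type*} [AddCommGroup V] [Module K V]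

set_option maxHeartbeats 1000000 in
/-- Exchange argument: improve a complement `C` of `Q` until it also satisfies `C ⊔ P = ⊤`. -/
lemma aux_improve (P Q : Submodule K V) [FiniteDimensional K (V ⧸ P)]
    [FiniteDimensional K (V ⧸ Q)]
    (hle : finrank K (V ⧸ P) ≤ finrank K (V ⧸ Q)) :
    ∀ (k : ℕ) (C : Submodule K V), C ⊓ Q = ⊥ → C ⊔ Q = ⊤ →
      finrank K (V ⧸ P) - finrank K (C.map P.mkQ) ≤ k →
      ∃ C' : Submodule K V, C' ⊓ Q = ⊥ ∧ C' ⊔ Q = ⊤ ∧ C' ⊔ P = ⊤ := by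
  intro k
  induction k with
  | zero =>
    intro C hinf hsup hmeas
    refine ⟨C, hinf, hsup, ?_⟩
    have htop : C.map P.mkQ = ⊤ := by
      by_contra hne
      have hlt : finrank K (C.map P.mkQ) < finrank K (V ⧸ P) :=
        Submodule.finrank_lt hne
      omega
    have := (Submodule.map_mkQ_eq_top (p := P) (p' := C)).mp htop
    rwa [sup_comm] at this
  | succ k ih =>
    intro C hinf hsup hmeas
    by_cases htop : C.map P.mkQ = ⊤
    · refine ⟨C, hinf, hsup, ?_⟩
      have := (Submodule.map_mkQ_eq_top (p := P) (p' := C)).mp htop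
      rwa [sup_comm] at this
    -- find u ∈ Q with mkQ u ∉ map mkQ C
    have hsupmap : C.map P.mkQ ⊔ Q.map P.mkQ = ⊤ := by
      rw [← Submodule.map_sup, hsup, Submodule.map_top, Submodule.range_mkQ]
    have hQnotle : ¬ Q.map P.mkQ ≤ C.map P.mkQ := by
      intro hcon
      rw [sup_eq_left.mpr hcon] at hsupmap
      exact htop hsupmap
    obtain ⟨y, hyQ, hyC⟩ := SetLike.not_le_iff_exists.mp hQnotle
    obtain ⟨u, huQ, rfl⟩ := hyQ
    -- C is finite dimensional and of the right dimension
    have hcompl : IsCompl Q C :=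
      ⟨disjoint_iff.mpr (by rw [inf_comm]; exact hinf),
       codisjoint_iff.mpr (by rw [sup_comm]; exact hsup)⟩
    let eC : (V ⧸ Q) ≃ₗ[K] C := Submodule.quotientEquivOfIsCompl Q C hcompl
    haveI : FiniteDimensional K C := eC.finiteDimensional
    have hC_rank : finrank K (V ⧸ Q) = finrank K C := eC.finrank_eq
    -- find nonzero c₀ ∈ C ∩ P
    have hranklt : finrank K (C.map P.mkQ) < finrank K (V ⧸ P) :=
      Submodule.finrank_lt htop
    have hkerpos : 0 < finrank K (LinearMap.ker (P.mkQ ∘ₗ C.subtype)) := by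
      have h1 : finrank K (LinearMap.range (P.mkQ ∘ₗ C.subtype)) +
          finrank K (LinearMap.ker (P.mkQ ∘ₗ C.subtype)) = finrank K C :=
        LinearMap.finrank_range_add_finrank_ker _
      have h2 : LinearMap.range (P.mkQ ∘ₗ C.subtype) = C.map P.mkQ := by
        rw [LinearMap.range_comp, Submodule.range_subtype]
      rw [h2] at h1
      omega
    have hkerne : LinearMap.ker (P.mkQ ∘ₗ C.subtype) ≠ ⊥ := by
      intro hbot
      rw [hbot, finrank_bot] at hkerpos
      omega
    obtain ⟨c₀', hc₀'mem, hc₀'ne⟩ := Submodule.exists_mem_ne_zero_of_ne_bot hkerne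
    have hc₀P : (c₀' : V) ∈ P := by
      have := hc₀'mem
      rw [LinearMap.mem_ker] at this
      have h0 : P.mkQ (c₀' : V) = 0 := this
      rwa [← LinearMap.mem_ker, Submodule.ker_mkQ] at h0
    have hc₀C : (c₀' : V) ∈ C := c₀'.2
    have hc₀ne : (c₀' : V) ≠ 0 := by
      simpa [Submodule.coe_eq_zero] using hc₀'ne
    -- complement of span {c₀'} inside C
    obtain ⟨D, hD⟩ := Submodule.exists_isCompl (span K {c₀'} : Submodule K C)
    set C'' : Submodule K V := D.map C.subtype with hC''def
    have hspan_map : (span K {c₀'} : Submodule K C).map C.subtype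
        = span K {(c₀' : V)} := by
      rw [Submodule.map_span]; simp
    have hCsplit : C'' ⊔ span K {(c₀' : V)} = C := by
      rw [hC''def, ← hspan_map, ← Submodule.map_sup, sup_comm, hD.sup_eq_top,
        Submodule.map_subtype_top]
    have hCdisj : C'' ⊓ span K {(c₀' : V)} = ⊥ := by
      rw [hC''def, ← hspan_map, ← Submodule.map_inf _ (Submodule.injective_subtype C),
        inf_comm, hD.inf_eq_bot, Submodule.map_bot]
    have hC''le : C'' ≤ C := Submodule.map_subtype_le _ _
    set v : V := (c₀' : V) + u with hvdef
    set C' : Submodule K V := C'' ⊔ span K {v} with hC'def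
    -- C' ⊓ Q = ⊥
    have hinf' : C' ⊓ Q = ⊥ := by
      rw [eq_bot_iff]
      rintro x ⟨hx1, hx2⟩
      obtain ⟨a, ha, b, hb, rfl⟩ := Submodule.mem_sup.mp hx1
      obtain ⟨lam, rfl⟩ := Submodule.mem_span_singleton.mp hb
      have hkey : a + lam • (c₀' : V) ∈ C ⊓ Q := by
        constructor
        · exact Submodule.add_mem _ (hC''le ha) (Submodule.smul_mem _ _ hc₀C)
        · have : a + lam • (c₀' : V) = (a + lam • v) - lam • u := by
            rw [hvdef]; module
          rw [this]
          exact Submodule.sub_mem _ hx2 (Submodule.smul_mem _ _ huQ)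
      rw [hinf, Submodule.mem_bot] at hkey
      have ha0 : a ∈ C'' ⊓ span K {(c₀' : V)} := by
        constructor
        · exact ha
        · have : a = (-lam) • (c₀' : V) := by linear_combination (norm := module) hkey
          rw [this]
          exact Submodule.smul_mem _ _ (Submodule.mem_span_singleton_self _)
      rw [hCdisj, Submodule.mem_bot] at ha0
      subst ha0
      rw [zero_add] at hkey
      have hlam : lam = 0 := by
        rcases smul_eq_zero.mp hkey with h | h
        · exact h
        · exact absurd h hc₀ne
      simp [hlam, Submodule.mem_bot]
    -- C' ⊔ Q = ⊤
    have hsup' : C' ⊔ Q = ⊤ := by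
      have hc₀mem : (c₀' : V) ∈ C' ⊔ Q := by
        have hveq : (c₀' : V) = v - u := by rw [hvdef, add_sub_cancel_right]
        rw [hveq]
        exact Submodule.sub_mem _
          (Submodule.mem_sup_left (Submodule.mem_sup_right
            (Submodule.mem_span_singleton_self v)))
          (Submodule.mem_sup_right huQ)
      have hCle : C ≤ C' ⊔ Q := by
        rw [← hCsplit]
        refine sup_le (le_trans le_sup_left le_sup_left) ?_
        rw [Submodule.span_le, Set.singleton_subset_iff]
        exact hc₀mem
      rw [eq_top_iff, ← hsup]
      exact sup_le hCle le_sup_right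
    -- the image under mkQ strictly grows
    have hmk0 : P.mkQ (c₀' : V) = 0 := by
      rw [← LinearMap.mem_ker, Submodule.ker_mkQ]; exact hc₀P
    have hmapC : C.map P.mkQ = C''.map P.mkQ := by
      rw [← hCsplit, Submodule.map_sup, Submodule.map_span, Set.image_singleton, hmk0,
        Submodule.span_zero_singleton, sup_bot_eq]
    have hPv : P.mkQ v = P.mkQ u := by
      rw [hvdef, map_add, hmk0, zero_add]
    have hmapC' : C'.map P.mkQ = C.map P.mkQ ⊔ span K {P.mkQ u} := by
      rw [hC'def, Submodule.map_sup, Submodule.map_span, Set.image_singleton, hPv, hmapC]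
    have hlt : C.map P.mkQ < C'.map P.mkQ := by
      rw [hmapC']
      refine lt_of_le_of_ne le_sup_left ?_
      intro hcon
      apply hyC
      rw [hcon]
      exact Submodule.mem_sup_right (Submodule.mem_span_singleton_self _)
    have hfr : finrank K (C.map P.mkQ) < finrank K (C'.map P.mkQ) :=
      Submodule.finrank_lt_finrank_of_lt hlt
    have hfr2 : finrank K (C'.map P.mkQ) ≤ finrank K (V ⧸ P) :=
      Submodule.finrank_le _
    exact ih C' hinf' hsup' (by omega)

/-- Existence of a nested pair of complements. -/
lemma aux_pair (P Q : Submodule K V) [FiniteDimensional K (V ⧸ P)]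
    [FiniteDimensional K (V ⧸ Q)]
    (hle : finrank K (V ⧸ P) ≤ finrank K (V ⧸ Q)) :
    ∃ A C : Submodule K V, A ≤ C ∧ A ⊓ P = ⊥ ∧ A ⊔ P = ⊤ ∧
      C ⊓ Q = ⊥ ∧ C ⊔ Q = ⊤ := by
  obtain ⟨Q', hQ'⟩ := Submodule.exists_isCompl Q
  obtain ⟨C, hC1, hC2, hC3⟩ := aux_improve P Q hle (finrank K (V ⧸ P)) Q'
    (by rw [inf_comm]; exact hQ'.inf_eq_bot)
    (by rw [sup_comm]; exact hQ'.sup_eq_top)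
    (Nat.sub_le _ _)
  obtain ⟨A₀, hA₀⟩ := Submodule.exists_isCompl (P.comap C.subtype : Submodule K C)
  set A : Submodule K V := A₀.map C.subtype with hAdef
  have hAleC : A ≤ C := Submodule.map_subtype_le _ _
  have hCP : (P.comap C.subtype).map C.subtype = C ⊓ P := Submodule.map_comap_subtype _ _
  refine ⟨A, C, hAleC, ?_, ?_, hC1, hC2⟩
  · have : A ⊓ P = A ⊓ (C ⊓ P) := by
      rw [← inf_assoc, inf_eq_left.mpr hAleC]
    rw [this, ← hCP, hAdef, ← Submodule.map_inf _ (Submodule.injective_subtype C),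
      inf_comm A₀, hA₀.inf_eq_bot, Submodule.map_bot]
  · have hsplit : A ⊔ (C ⊓ P) = C := by
      rw [hAdef, ← hCP, ← Submodule.map_sup, sup_comm A₀, hA₀.sup_eq_top, Submodule.map_subtype_top]
    have : A ⊔ P = (A ⊔ (C ⊓ P)) ⊔ P := by
      rw [sup_assoc, sup_eq_right.mpr (inf_le_right : C ⊓ P ≤ P)]
    rw [this, hsplit, hC3]

end Aux

/-- The order `T ≼ S` on finite-rank operators from the paper: there are `n ≤ m` and
linearly independent vectors `e₁, …, e_m` of `E` such that `span{e₁,…,eₙ}` is an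
algebraic complement of `ker T`, `span{e₁,…,e_m}` is an algebraic complement of `ker S`,
and `T eᵢ = 0` for `n < i ≤ m`. -/
def OpOrder {E X : Type*} [NormedAddCommGroup E] [NormedSpace ℝ E]
    [NormedAddCommGroup X] [NormedSpace ℝ X] (T S : E →L[ℝ] X) : Prop :=
  ∃ (n m : ℕ) (hnm : n ≤ m) (e : Fin m → E),
    LinearIndependent ℝ e ∧
    (Submodule.span ℝ (Set.range fun i : Fin n => e (Fin.castLE hnm i)) ⊓
        LinearMap.ker (T : E →ₗ[ℝ] X) = ⊥) ∧
    (Submodule.span ℝ (Set.range fun i : Fin n => e (Fin.castLE hnm i)) ⊔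
        LinearMap.ker (T : E →ₗ[ℝ] X) = ⊤) ∧
    (Submodule.span ℝ (Set.range e) ⊓ LinearMap.ker (S : E →ₗ[ℝ] X) = ⊥) ∧
    (Submodule.span ℝ (Set.range e) ⊔ LinearMap.ker (S : E →ₗ[ℝ] X) = ⊤) ∧
    ∀ i : Fin m, n ≤ (i : ℕ) → T (e i) = 0

section Forward

variable {E X : Type*} [NormedAddCommGroup E] [NormedSpace ℝ E]
    [NormedAddCommGroup X] [NormedSpace ℝ X]

/-- `OpOrder T S` forces `codim (ker T) ≤ codim (ker S)`. -/
lemma finrank_le_of_opOrder {T S : E →L[ℝ] X} (h : OpOrder T S) :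
    finrank ℝ (E ⧸ LinearMap.ker (T : E →ₗ[ℝ] X)) ≤ finrank ℝ (E ⧸ LinearMap.ker (S : E →ₗ[ℝ] X)) := by
  obtain ⟨n, m, hnm, e, he, h1, h2, h3, h4, -⟩ := h
  have hT : finrank ℝ (E ⧸ LinearMap.ker (T : E →ₗ[ℝ] X)) = n := by
    have hli : LinearIndependent ℝ (fun i : Fin n => e (Fin.castLE hnm i)) :=
      he.comp _ (Fin.castLE_injective hnm)
    have hcompl : IsCompl (LinearMap.ker (T : E →ₗ[ℝ] X))
        (Submodule.span ℝ (Set.range fun i : Fin n => e (Fin.castLE hnm i))) :=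
      ⟨disjoint_iff.mpr (by rw [inf_comm]; exact h1),
       codisjoint_iff.mpr (by rw [sup_comm]; exact h2)⟩
    rw [(Submodule.quotientEquivOfIsCompl _ _ hcompl).finrank_eq,
      finrank_span_eq_card hli, Fintype.card_fin]
  have hS : finrank ℝ (E ⧸ LinearMap.ker (S : E →ₗ[ℝ] X)) = m := by
    have hcompl : IsCompl (LinearMap.ker (S : E →ₗ[ℝ] X)) (Submodule.span ℝ (Set.range e)) :=
      ⟨disjoint_iff.mpr (by rw [inf_comm]; exact h3),
       codisjoint_iff.mpr (by rw [sup_comm]; exact h4)⟩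
    rw [(Submodule.quotientEquivOfIsCompl _ _ hcompl).finrank_eq,
      finrank_span_eq_card he, Fintype.card_fin]
  omega

/-- Conversely, the codimension inequality gives `OpOrder`. -/
lemma opOrder_of_finrank_le (T U : E →L[ℝ] X)
    [FiniteDimensional ℝ (E ⧸ LinearMap.ker (T : E →ₗ[ℝ] X))]
    [FiniteDimensional ℝ (E ⧸ LinearMap.ker (U : E →ₗ[ℝ] X))]
    (h : finrank ℝ (E ⧸ LinearMap.ker (T : E →ₗ[ℝ] X)) ≤ finrank ℝ (E ⧸ LinearMap.ker (U : E →ₗ[ℝ] X))) :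
    OpOrder T U := by
  obtain ⟨A, C, hAC, hA1, hA2, hC1, hC2⟩ :=
    aux_pair (LinearMap.ker (T : E →ₗ[ℝ] X)) (LinearMap.ker (U : E →ₗ[ℝ] X)) h
  set D : Submodule ℝ E := C ⊓ LinearMap.ker (T : E →ₗ[ℝ] X) with hDdef
  have hADC : A ⊔ D = C := by
    have := sup_inf_assoc_of_le (LinearMap.ker (T : E →ₗ[ℝ] X)) hAC
    rw [hA2, top_inf_eq] at this
    rw [hDdef, inf_comm, ← this]
  have hADdisj : A ⊓ D = ⊥ := by
    rw [eq_bot_iff]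
    intro x hx
    have : x ∈ A ⊓ LinearMap.ker (T : E →ₗ[ℝ] X) := ⟨hx.1, hx.2.2⟩
    rwa [hA1] at this
  -- finite dimensionality
  have hcomplC : IsCompl (LinearMap.ker (U : E →ₗ[ℝ] X)) C :=
    ⟨disjoint_iff.mpr (by rw [inf_comm]; exact hC1),
     codisjoint_iff.mpr (by rw [sup_comm]; exact hC2)⟩
  haveI : FiniteDimensional ℝ C :=
    (Submodule.quotientEquivOfIsCompl _ _ hcomplC).finiteDimensional
  haveI : FiniteDimensional ℝ A := Submodule.finiteDimensional_of_le hAC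
  haveI : FiniteDimensional ℝ D := Submodule.finiteDimensional_of_le (inf_le_left)
  set n := finrank ℝ A with hn
  set k := finrank ℝ D with hk
  let bA : Basis (Fin n) ℝ A := Module.finBasis ℝ A
  let bD : Basis (Fin k) ℝ D := Module.finBasis ℝ D
  set a : Fin n → E := fun i => (bA i : E) with hadef
  set d : Fin k → E := fun i => (bD i : E) with hddef
  have ha_li : LinearIndependent ℝ a :=
    bA.linearIndependent.map' A.subtype (Submodule.ker_subtype A)
  have hd_li : LinearIndependent ℝ d :=
    bD.linearIndependent.map' D.subtype (Submodule.ker_subtype D)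
  have ha_span : Submodule.span ℝ (Set.range a) = A := by
    have : Set.range a = A.subtype '' Set.range bA := by
      rw [← Set.range_comp]; rfl
    rw [this, ← Submodule.map_span, bA.span_eq, Submodule.map_subtype_top]
  have hd_span : Submodule.span ℝ (Set.range d) = D := by
    have : Set.range d = D.subtype '' Set.range bD := by
      rw [← Set.range_comp]; rfl
    rw [this, ← Submodule.map_span, bD.span_eq, Submodule.map_subtype_top]
  set e : Fin (n + k) → E := Fin.append a d with hedef
  have he_sum : e = Sum.elim a d ∘ finSumFinEquiv.symm := by
    funext i
    refine Fin.addCases (fun j => ?_) (fun j => ?_) i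
    · rw [hedef, Fin.append_left, Function.comp_apply,
        finSumFinEquiv_symm_apply_castAdd, Sum.elim_inl]
    · rw [hedef, Fin.append_right, Function.comp_apply,
        finSumFinEquiv_symm_apply_natAdd, Sum.elim_inr]
  have he_li : LinearIndependent ℝ e := by
    rw [he_sum]
    refine (ha_li.sum_type hd_li ?_).comp _ finSumFinEquiv.symm.injective
    rw [ha_span, hd_span]
    exact disjoint_iff.mpr hADdisj
  have hnm : n ≤ n + k := Nat.le_add_right n k
  have hfirst : (fun i : Fin n => e (Fin.castLE hnm i)) = a := by
    funext i
    have : Fin.castLE hnm i = Fin.castAdd k i := rfl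
    rw [this, hedef, Fin.append_left]
  have hrange : Set.range e = Set.range a ∪ Set.range d := by
    rw [he_sum]
    rw [Set.range_comp, Equiv.range_eq_univ, Set.image_univ, Set.Sum.elim_range]
  refine ⟨n, n + k, hnm, e, he_li, ?_, ?_, ?_, ?_, ?_⟩
  · rw [hfirst, ha_span, hA1]
  · rw [hfirst, ha_span, hA2]
  · rw [hrange, Submodule.span_union, ha_span, hd_span, hADC, hC1]
  · rw [hrange, Submodule.span_union, ha_span, hd_span, hADC, hC2]
  · intro i hi
    have hik : (i : ℕ) - n < k := by omega
    have : i = Fin.natAdd n ⟨(i : ℕ) - n, hik⟩ := by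
      apply Fin.ext
      simp only [Fin.natAdd_mk]
      omega
    rw [this, hedef, Fin.append_right]
    have hmemD : d ⟨(i : ℕ) - n, hik⟩ ∈ D := (bD _).2
    have : d ⟨(i : ℕ) - n, hik⟩ ∈ LinearMap.ker (T : E →ₗ[ℝ] X) :=
      (inf_le_right : C ⊓ LinearMap.ker (T : E →ₗ[ℝ] X) ≤ _) hmemD
    simpa using this

end Forward

/-- The relation `≼` is transitive on finite-rank bounded operators. -/
theorem opOrder_trans (E X : Type*)
    [NormedAddCommGroup E] [NormedSpace ℝ E] [CompleteSpace E]
    [NormedAddCommGroup X] [NormedSpace ℝ X] [CompleteSpace X]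
    (T S U : E →L[ℝ] X)
    (hT : FiniteDimensional ℝ (LinearMap.range (T : E →ₗ[ℝ] X)))
    (hS : FiniteDimensional ℝ (LinearMap.range (S : E →ₗ[ℝ] X)))
    (hU : FiniteDimensional ℝ (LinearMap.range (U : E →ₗ[ℝ] X)))
    (hTS : OpOrder T S) (hSU : OpOrder S U) : OpOrder T U := by
  haveI hT' : FiniteDimensional ℝ (LinearMap.range (T : E →ₗ[ℝ] X)) := hT
  haveI hU' : FiniteDimensional ℝ (LinearMap.range (U : E →ₗ[ℝ] X)) := hU
  haveI : FiniteDimensional ℝ (E ⧸ LinearMap.ker (T : E →ₗ[ℝ] X)) :=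
    (LinearMap.quotKerEquivRange (T : E →ₗ[ℝ] X)).symm.finiteDimensional
  haveI : FiniteDimensional ℝ (E ⧸ LinearMap.ker (U : E →ₗ[ℝ] X)) :=
    (LinearMap.quotKerEquivRange (U : E →ₗ[ℝ] X)).symm.finiteDimensional
  exact opOrder_of_finrank_le T U
    (le_trans (finrank_le_of_opOrder hTS) (finrank_le_of_opOrder hSU))
end

section
/- Let E and X be real Banach spaces with X infinite-dimensional. Then the relation ≼ on finite-rank bounded linear operators from E to X is upward directed: for every pair of finite-rank bounded operators S, T : E → X there exists a finite-rank bounded operator U : E → X such that S ≼ U and T ≼ U. -/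
open Submodule Module

/-- Key lemma: if `ker U ≤ ker S` and both operators have finite rank, then `S ≼ U`. -/
lemma opOrder_of_ker_le {E X : Type*} [NormedAddCommGroup E] [NormedSpace ℝ E]
    [NormedAddCommGroup X] [NormedSpace ℝ X] (S U : E →L[ℝ] X)
    (hle : LinearMap.ker (U : E →ₗ[ℝ] X) ≤ LinearMap.ker (S : E →ₗ[ℝ] X))
    (hS : FiniteDimensional ℝ (LinearMap.range (S : E →ₗ[ℝ] X)))
    (hU : FiniteDimensional ℝ (LinearMap.range (U : E →ₗ[ℝ] X))) : OpOrder S U := by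
  classical
  set KS := LinearMap.ker (S : E →ₗ[ℝ] X) with hKS
  set KU := LinearMap.ker (U : E →ₗ[ℝ] X) with hKU
  -- complement of ker S
  obtain ⟨C, hC⟩ := Submodule.exists_isCompl KS
  haveI hSr : FiniteDimensional ℝ (LinearMap.range (S : E →ₗ[ℝ] X)) := hS
  haveI : FiniteDimensional ℝ C :=
    LinearEquiv.finiteDimensional
      (((S : E →ₗ[ℝ] X).quotKerEquivRange.symm).trans
        (Submodule.quotientEquivOfIsCompl KS C hC))
  -- complement of ker U inside ker S
  obtain ⟨D', hD'⟩ := Submodule.exists_isCompl (KU.comap KS.subtype)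
  set D : Submodule ℝ E := D'.map KS.subtype with hD
  have hDle : D ≤ KS := by
    rw [hD]
    exact Submodule.map_subtype_le _ _
  have hDKU : D ⊓ KU = ⊥ := by
    rw [eq_bot_iff]
    rintro x ⟨hx1, hx2⟩
    obtain ⟨y, hy, rfl⟩ := hx1
    have : y ∈ D' ⊓ KU.comap KS.subtype := ⟨hy, hx2⟩
    rw [disjoint_iff.mp hD'.symm.disjoint] at this
    simp only [Submodule.mem_bot] at this
    simp [this]
  have hDsup : D ⊔ KU = KS := by
    have h1 : KU.comap KS.subtype ⊔ D' = ⊤ := codisjoint_iff.mp hD'.codisjoint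
    have h2 := congrArg (Submodule.map KS.subtype) h1
    rw [Submodule.map_sup, Submodule.map_top, Submodule.range_subtype,
      Submodule.map_comap_subtype, inf_eq_right.mpr hle] at h2
    rw [sup_comm]
    exact h2
  haveI : FiniteDimensional ℝ D := by
    let f : D →ₗ[ℝ] LinearMap.range (U : E →ₗ[ℝ] X) :=
      ((U : E →ₗ[ℝ] X).rangeRestrict).comp D.subtype
    have hf : Function.Injective f := by
      intro a b hab
      have : ((a : E) - b) ∈ D ⊓ KU := by
        refine ⟨sub_mem a.2 b.2, ?_⟩
        have h3 : U (a : E) = U (b : E) := congrArg Subtype.val hab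
        have hmem : U ((a : E) - (b : E)) = 0 := by rw [map_sub, h3, sub_self]
        simpa [hKU, LinearMap.mem_ker] using hmem
      rw [hDKU] at this
      simp only [Submodule.mem_bot, sub_eq_zero] at this
      exact Subtype.ext this
    exact Module.Finite.of_injective f hf
  set n := finrank ℝ C
  set k := finrank ℝ D
  let b := finBasis ℝ C
  let c := finBasis ℝ D
  set bv : Fin n → E := fun i => (b i : E) with hbv
  set cv : Fin k → E := fun i => (c i : E) with hcv
  have hbvLI : LinearIndependent ℝ bv := b.linearIndependent.map' C.subtype C.ker_subtype
  have hcvLI : LinearIndependent ℝ cv := c.linearIndependent.map' D.subtype D.ker_subtype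
  have hbvspan : Submodule.span ℝ (Set.range bv) = C := by
    have : Set.range bv = C.subtype '' (Set.range b) := by
      rw [← Set.range_comp]; rfl
    rw [this, ← Submodule.map_span, b.span_eq, Submodule.map_top, Submodule.range_subtype]
  have hcvspan : Submodule.span ℝ (Set.range cv) = D := by
    have : Set.range cv = D.subtype '' (Set.range c) := by
      rw [← Set.range_comp]; rfl
    rw [this, ← Submodule.map_span, c.span_eq, Submodule.map_top, Submodule.range_subtype]
  have hCD : C ⊓ D = ⊥ := by
    rw [eq_bot_iff]
    intro x hx
    have : x ∈ KS ⊓ C := ⟨hDle hx.2, hx.1⟩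
    rwa [disjoint_iff.mp hC.disjoint] at this
  set e : Fin (n + k) → E := Sum.elim bv cv ∘ finSumFinEquiv.symm with he
  have heLI : LinearIndependent ℝ e := by
    apply (linearIndependent_equiv finSumFinEquiv.symm).mpr
    refine hbvLI.sum_type hcvLI ?_
    rw [hbvspan, hcvspan]
    exact disjoint_iff.mpr hCD
  have hfirst : (fun i : Fin n => e (Fin.castLE (Nat.le_add_right n k) i)) = bv := by
    funext i
    have h1 : (Fin.castLE (Nat.le_add_right n k) i) = Fin.castAdd k i := rfl
    rw [he]
    simp [h1]
  have hall : Submodule.span ℝ (Set.range e) = C ⊔ D := by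
    have : Set.range e = Set.range (Sum.elim bv cv) :=
      finSumFinEquiv.symm.surjective.range_comp _
    rw [this, Set.Sum.elim_range, Submodule.span_union, hbvspan, hcvspan]
  refine ⟨n, n + k, Nat.le_add_right n k, e, heLI, ?_, ?_, ?_, ?_, ?_⟩
  · rw [hfirst, hbvspan]
    rw [← hKS]
    exact disjoint_iff.mp hC.symm.disjoint
  · rw [hfirst, hbvspan, ← hKS]
    exact codisjoint_iff.mp hC.symm.codisjoint
  · rw [hall, ← hKU, eq_bot_iff]
    rintro x ⟨hx1, hx2⟩
    obtain ⟨cc, hcc, d, hd, rfl⟩ := Submodule.mem_sup.mp hx1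
    have hSd : S d = 0 := hDle hd
    have hScd : S (cc + d) = 0 := hle hx2
    have hScc : cc ∈ KS := by
      have : S cc = 0 := by
        have := hScd
        rw [map_add, hSd, add_zero] at this
        exact this
      exact this
    have hcc0 : cc = 0 := by
      have : cc ∈ KS ⊓ C := ⟨hScc, hcc⟩
      rwa [disjoint_iff.mp hC.disjoint, Submodule.mem_bot] at this
    subst hcc0
    have : d ∈ D ⊓ KU := ⟨hd, by simpa using hx2⟩
    rw [hDKU, Submodule.mem_bot] at this
    simp [this]
  · rw [hall, ← hKU, sup_assoc, hDsup]
    exact codisjoint_iff.mp hC.symm.codisjoint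
  · intro i hi
    set j : Fin k := ⟨(i : ℕ) - n, by omega⟩ with hj
    have hij : i = Fin.natAdd n j := by
      apply Fin.ext
      simp [hj, Fin.natAdd]
      omega
    have : e i = cv j := by
      rw [hij, he]
      simp
    rw [this]
    exact hDle (by exact (c j).2 : (cv j) ∈ D)

/-- If `X` is infinite-dimensional, the relation `≼` is upward directed on the
finite-rank bounded operators from `E` to `X`. -/
theorem opOrder_directed (E X : Type*)
    [NormedAddCommGroup E] [NormedSpace ℝ E] [CompleteSpace E]
    [NormedAddCommGroup X] [NormedSpace ℝ X] [CompleteSpace X]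
    (hX : ¬ FiniteDimensional ℝ X)
    (S T : E →L[ℝ] X)
    (hS : FiniteDimensional ℝ (LinearMap.range (S : E →ₗ[ℝ] X)))
    (hT : FiniteDimensional ℝ (LinearMap.range (T : E →ₗ[ℝ] X))) :
    ∃ U : E →L[ℝ] X, FiniteDimensional ℝ (LinearMap.range (U : E →ₗ[ℝ] X)) ∧
      OpOrder S U ∧ OpOrder T U := by
  classical
  set V := (LinearMap.range (S : E →ₗ[ℝ] X)) × (LinearMap.range (T : E →ₗ[ℝ] X))
  haveI : FiniteDimensional ℝ V := by infer_instance
  -- an injective linear map from V to X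
  set d := finrank ℝ V with hd
  have hrank : (d : Cardinal) ≤ Module.rank ℝ X := by
    refine le_trans (le_of_lt (Cardinal.nat_lt_aleph0 d)) ?_
    by_contra h
    exact hX (Module.rank_lt_aleph0_iff.mp (lt_of_not_ge h))
  obtain ⟨x, hx⟩ := exists_linearIndependent_of_le_rank hrank
  let bb := finBasis ℝ V
  let φ : V →ₗ[ℝ] X := (Finsupp.linearCombination ℝ x).comp (bb.repr : V →ₗ[ℝ] (Fin d →₀ ℝ))
  have hφ : Function.Injective φ :=
    (show Function.Injective (Finsupp.linearCombination ℝ x) from hx).comp bb.repr.injective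
  let P : E →L[ℝ] V :=
    (S.codRestrict (LinearMap.range (S : E →ₗ[ℝ] X)) fun z => LinearMap.mem_range_self _ z).prod
      (T.codRestrict (LinearMap.range (T : E →ₗ[ℝ] X)) fun z => LinearMap.mem_range_self _ z)
  have hkerP : LinearMap.ker (P : E →ₗ[ℝ] V) = LinearMap.ker (S : E →ₗ[ℝ] X) ⊓ LinearMap.ker (T : E →ₗ[ℝ] X) := by
    ext z
    simp only [LinearMap.mem_ker, Submodule.mem_inf]
    constructor
    · intro h
      have h1 : (P z).1 = 0 := by rw [show P z = 0 from h]; rfl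
      have h2 : (P z).2 = 0 := by rw [show P z = 0 from h]; rfl
      exact ⟨congrArg Subtype.val h1, congrArg Subtype.val h2⟩
    · rintro ⟨h1, h2⟩
      have e1 : ((P z).1 : X) = 0 := h1
      have e2 : ((P z).2 : X) = 0 := h2
      have hz : P z = (0, 0) := Prod.ext (Subtype.ext e1) (Subtype.ext e2)
      exact hz
  let φL : V →L[ℝ] X := LinearMap.toContinuousLinearMap φ
  refine ⟨φL.comp P, ?_, ?_, ?_⟩
  · have hle : LinearMap.range ((φL.comp P : E →L[ℝ] X) : E →ₗ[ℝ] X) ≤ LinearMap.range φ := by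
      rintro z ⟨w, rfl⟩
      exact ⟨P w, rfl⟩
    exact Submodule.finiteDimensional_of_le hle
  all_goals {
    apply opOrder_of_ker_le
    · rw [show LinearMap.ker ((φL.comp P : E →L[ℝ] X) : E →ₗ[ℝ] X) = LinearMap.ker (P : E →ₗ[ℝ] V) from ?_]
      · rw [hkerP]; first | exact inf_le_left | exact inf_le_right
      · ext z
        simp only [LinearMap.mem_ker, ContinuousLinearMap.coe_comp', Function.comp_apply]
        constructor
        · intro h
          have : φ (P z) = φ 0 := by rw [map_zero]; exact h
          simpa using hφ this
        · intro h; simp [show P z = 0 from h, show φL (P z) = φ (P z) from rfl]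
    · assumption
    · have hle : LinearMap.range ((φL.comp P : E →L[ℝ] X) : E →ₗ[ℝ] X) ≤ LinearMap.range φ := by
        rintro z ⟨w, rfl⟩
        exact ⟨P w, rfl⟩
      exact Submodule.finiteDimensional_of_le hle
  }
end
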